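/- In the supercritical case h > h₀ with solution ω(t) = 2√(2h/J)(K₂cosh²(γt) − K₁ sinh(γt)cosh(γt))/Q(t), v₁(t) = σ√(2h/M)((K₂²−1)cosh²(γt) − 2K₁K₂ sinh(γt)cosh(γt) + K₁² sinh²(γt))/Q(t), where Q(t) = (1+K₂²)cosh²(γt) − 2K₁K₂ sinh(γt)cosh(γt) + K₁² sinh²(γt), the limit radii are r± := lim_{t→±∞} v₁(t)/ω(t) = (σ/2)√(J/M)·((K₂ ∓ K₁)² − 1)/(K₂ ∓ K₁), and r₊ ≠ r₋ whenever K₁ ≠ 0 and K₂² − K₁² ≠ −1 (and K₂ ± K₁ ≠ 0). -/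

import Mathlib

open Filter

lemma my_tanh_atTop : Tendsto Real.tanh atTop (nhds 1) := by
  have key : ∀ x : ℝ, Real.tanh x = (1 - Real.exp (-2 * x)) / (1 + Real.exp (-2 * x)) := by
    intro x
    have e1 : Real.exp (-2 * x) = Real.exp (-x) * Real.exp (-x) := by
      rw [← Real.exp_add]; ring_nf
    have e2 : Real.exp x * Real.exp (-x) = 1 := by
      rw [← Real.exp_add]; simp
    have hx : Real.exp x ≠ 0 := (Real.exp_pos x).ne'
    have hd : (1 : ℝ) + Real.exp (-2 * x) ≠ 0 := by positivity
    have hc : Real.cosh x ≠ 0 := (Real.cosh_pos x).ne'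
    rw [Real.tanh_eq_sinh_div_cosh, Real.sinh_eq, Real.cosh_eq, e1]
    rw [div_eq_div_iff (by positivity) (by positivity)]
    linear_combination Real.exp (-x) * e2
  have hm2 : Tendsto (fun x : ℝ => 2 * x) atTop atTop :=
    tendsto_id.const_mul_atTop two_pos
  have hm : Tendsto (fun x : ℝ => -(2 * x)) atTop atBot := tendsto_neg_atTop_atBot.comp hm2
  have h2 : Tendsto (fun x : ℝ => Real.exp (-2 * x)) atTop (nhds 0) := by
    have hcomp := Real.tendsto_exp_atBot.comp hm
    exact Tendsto.congr (fun x => by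
      show Real.exp (-(2 * x)) = Real.exp (-2 * x); ring_nf) hcomp
  have hone : Tendsto (fun _ : ℝ => (1 : ℝ)) atTop (nhds 1) := tendsto_const_nhds
  have h3 := (hone.sub h2).div (hone.add h2) (by norm_num : (1 : ℝ) + 0 ≠ 0)
  rw [show ((1 : ℝ) - 0) / (1 + 0) = 1 by norm_num] at h3
  exact Tendsto.congr (fun x => (key x).symm) h3

lemma my_tanh_atBot : Tendsto Real.tanh atBot (nhds (-1)) := by
  have := (my_tanh_atTop.comp tendsto_neg_atBot_atTop).neg
  simp only [Function.comp] at this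
  exact this.congr (fun x => by simp)

theorem supercritical_limit_radii
    (h J M γ σ K₁ K₂ : ℝ) (hh : h > 0) (hJ : J > 0) (hM : M > 0) (hγ : γ > 0)
    (hσ : σ = 1 ∨ σ = -1) (hK₁ : K₁ ≠ 0)
    (hK₂₁ : K₂ + K₁ ≠ 0) (hK₂₂ : K₂ - K₁ ≠ 0)
    (Q ω v₁ : ℝ → ℝ)
    (hQ : ∀ t, Q t = (1 + K₂ ^ 2) * Real.cosh (γ * t) ^ 2
      - 2 * K₁ * K₂ * Real.sinh (γ * t) * Real.cosh (γ * t)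
      + K₁ ^ 2 * Real.sinh (γ * t) ^ 2)
    (hQpos : ∀ t, Q t > 0)
    (hω : ∀ t, ω t = 2 * Real.sqrt (2 * h / J) *
      ((K₂ * Real.cosh (γ * t) ^ 2 - K₁ * Real.sinh (γ * t) * Real.cosh (γ * t)) / Q t))
    (hv : ∀ t, v₁ t = σ * Real.sqrt (2 * h / M) *
      (((K₂ ^ 2 - 1) * Real.cosh (γ * t) ^ 2
        - 2 * K₁ * K₂ * Real.sinh (γ * t) * Real.cosh (γ * t)
        + K₁ ^ 2 * Real.sinh (γ * t) ^ 2) / Q t)) :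
    Tendsto (fun t => v₁ t / ω t) atTop
      (nhds ((σ / 2) * Real.sqrt (J / M) * ((K₂ - K₁) ^ 2 - 1) / (K₂ - K₁))) ∧
    Tendsto (fun t => v₁ t / ω t) atBot
      (nhds ((σ / 2) * Real.sqrt (J / M) * ((K₂ + K₁) ^ 2 - 1) / (K₂ + K₁))) ∧
    (K₂ ^ 2 - K₁ ^ 2 ≠ -1 →
      (σ / 2) * Real.sqrt (J / M) * ((K₂ - K₁) ^ 2 - 1) / (K₂ - K₁) ≠
      (σ / 2) * Real.sqrt (J / M) * ((K₂ + K₁) ^ 2 - 1) / (K₂ + K₁)) := by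
  have hs : Real.sqrt (2 * h / M) / Real.sqrt (2 * h / J) = Real.sqrt (J / M) := by
    rw [← Real.sqrt_div (by positivity)]
    congr 1
    field_simp
  have hsJ : (0 : ℝ) < Real.sqrt (2 * h / J) := Real.sqrt_pos.mpr (by positivity)
  have main : ∀ (l : Filter ℝ) (ε : ℝ),
      Tendsto (fun t => Real.tanh (γ * t)) l (nhds ε) → K₂ - K₁ * ε ≠ 0 →
      Tendsto (fun t => v₁ t / ω t) l
        (nhds ((σ / 2) * Real.sqrt (J / M) * ((K₂ - K₁ * ε) ^ 2 - 1) / (K₂ - K₁ * ε))) := by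
    intro l ε hth hd
    have hden : Tendsto (fun t => K₂ - K₁ * Real.tanh (γ * t)) l (nhds (K₂ - K₁ * ε)) :=
      tendsto_const_nhds.sub (hth.const_mul K₁)
    have hnum : Tendsto (fun t => (K₂ ^ 2 - 1) - 2 * K₁ * K₂ * Real.tanh (γ * t)
        + K₁ ^ 2 * Real.tanh (γ * t) ^ 2) l
        (nhds ((K₂ ^ 2 - 1) - 2 * K₁ * K₂ * ε + K₁ ^ 2 * ε ^ 2)) := by
      exact (tendsto_const_nhds.sub (hth.const_mul (2 * K₁ * K₂))).add
        ((hth.pow 2).const_mul (K₁ ^ 2))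
    have hlim := ((hnum.div hden hd).const_mul
      ((σ / 2) * (Real.sqrt (2 * h / M) / Real.sqrt (2 * h / J))))
    have hev : ∀ᶠ t in l, K₂ - K₁ * Real.tanh (γ * t) ≠ 0 := hden.eventually_ne hd
    have heq : ∀ᶠ t in l, ((σ / 2) * (Real.sqrt (2 * h / M) / Real.sqrt (2 * h / J))) *
        (((K₂ ^ 2 - 1) - 2 * K₁ * K₂ * Real.tanh (γ * t)
          + K₁ ^ 2 * Real.tanh (γ * t) ^ 2) / (K₂ - K₁ * Real.tanh (γ * t)))
        = v₁ t / ω t := by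
      filter_upwards [hev] with t hne
      have hct : (0 : ℝ) < Real.cosh (γ * t) := Real.cosh_pos _
      have hst : Real.sinh (γ * t) = Real.tanh (γ * t) * Real.cosh (γ * t) := by
        rw [Real.tanh_eq_sinh_div_cosh]; field_simp
      have hQne : Q t ≠ 0 := (hQpos t).ne'
      have hv' : v₁ t = σ * Real.sqrt (2 * h / M) *
          (Real.cosh (γ * t) ^ 2 * ((K₂ ^ 2 - 1) - 2 * K₁ * K₂ * Real.tanh (γ * t)
            + K₁ ^ 2 * Real.tanh (γ * t) ^ 2) / Q t) := by
        rw [hv, hst]; ring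
      have hω' : ω t = 2 * Real.sqrt (2 * h / J) *
          (Real.cosh (γ * t) ^ 2 * (K₂ - K₁ * Real.tanh (γ * t)) / Q t) := by
        rw [hω, hst]; ring
      rw [hv', hω']
      generalize Real.sqrt (2 * h / M) = sM
      have hsJ' : Real.sqrt (2 * h / J) ≠ 0 := hsJ.ne'
      generalize hgen : Real.sqrt (2 * h / J) = sJ at hsJ'
      field_simp
    have hfin : ((σ / 2) * (Real.sqrt (2 * h / M) / Real.sqrt (2 * h / J))) *
        (((K₂ ^ 2 - 1) - 2 * K₁ * K₂ * ε + K₁ ^ 2 * ε ^ 2) / (K₂ - K₁ * ε))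
        = (σ / 2) * Real.sqrt (J / M) * ((K₂ - K₁ * ε) ^ 2 - 1) / (K₂ - K₁ * ε) := by
      rw [hs, show (K₂ ^ 2 - 1) - 2 * K₁ * K₂ * ε + K₁ ^ 2 * ε ^ 2
        = (K₂ - K₁ * ε) ^ 2 - 1 by ring, mul_div_assoc]
    rw [← hfin]
    exact hlim.congr' heq
  have htop : Tendsto (fun t : ℝ => Real.tanh (γ * t)) atTop (nhds 1) :=
    my_tanh_atTop.comp (tendsto_id.const_mul_atTop hγ)
  have hbot : Tendsto (fun t : ℝ => Real.tanh (γ * t)) atBot (nhds (-1)) :=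
    my_tanh_atBot.comp (tendsto_id.const_mul_atBot hγ)
  refine ⟨?_, ?_, ?_⟩
  · have := main atTop 1 htop (by simpa using hK₂₂)
    simpa using this
  · have := main atBot (-1) hbot (by rw [mul_neg_one, sub_neg_eq_add]; exact hK₂₁)
    rw [mul_neg_one, sub_neg_eq_add] at this
    exact this
  · intro hne1 heq
    have hσne : σ ≠ 0 := by rcases hσ with rfl | rfl <;> norm_num
    have hc : (σ / 2) * Real.sqrt (J / M) ≠ 0 :=
      mul_ne_zero (by positivity) (Real.sqrt_pos.mpr (by positivity)).ne'
    rw [mul_div_assoc, mul_div_assoc] at heq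
    have h4 := mul_left_cancel₀ hc heq
    rw [div_eq_div_iff hK₂₂ hK₂₁] at h4
    have h5 : K₁ * (K₂ ^ 2 - K₁ ^ 2 + 1) = 0 := by linear_combination (-1/2) * h4
    rcases mul_eq_zero.mp h5 with h6 | h6
    · exact hK₁ h6
    · exact hne1 (by linarith)
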